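/- Let Q be the Steiner quadruple system of the extended Hamming code of length n, and let C¹ be the set of 6-subsets of {1,…,n} containing exactly one block of Q, and C² the set of 6-subsets containing exactly 3 blocks. Then every vertex of C¹ is adjacent in the Johnson graph J(n,6) to exactly 6 vertices of C². -/
import Mathlib

lemma aux_inter_two {n : ℕ} {Q : Set (Finset (Fin n))}
    (hQ4 : ∀ B ∈ Q, B.card = 4)
    (hSQS : ∀ s : Finset (Fin n), s.card = 3 → ∃! B, B ∈ Q ∧ s ⊆ B)
    {z B B' : Finset (Fin n)} (hz : z.card = 6)
    (hB : B ∈ Q) (hB' : B' ∈ Q) (hBz : B ⊆ z) (hB'z : B' ⊆ z) (hne : B ≠ B') :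
    (B ∩ B').card = 2 := by
  have h4 := hQ4 B hB
  have h4' := hQ4 B' hB'
  have hun : (B ∪ B').card ≤ 6 := hz ▸ Finset.card_le_card (Finset.union_subset hBz hB'z)
  have hkey := Finset.card_union_add_card_inter B B'
  have hlt : (B ∩ B').card < 3 := by
    by_contra h
    push_neg at h
    obtain ⟨s, hs, hs3⟩ := Finset.exists_subset_card_eq h
    obtain ⟨B'', _, huniq⟩ := hSQS s hs3
    have h1 := huniq B ⟨hB, hs.trans Finset.inter_subset_left⟩
    have h2 := huniq B' ⟨hB', hs.trans Finset.inter_subset_right⟩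
    exact hne (h1.trans h2.symm)
  omega

lemma aux_union_eq {n : ℕ} {Q : Set (Finset (Fin n))}
    (hQ4 : ∀ B ∈ Q, B.card = 4)
    (hSQS : ∀ s : Finset (Fin n), s.card = 3 → ∃! B, B ∈ Q ∧ s ⊆ B)
    {z B B' : Finset (Fin n)} (hz : z.card = 6)
    (hB : B ∈ Q) (hB' : B' ∈ Q) (hBz : B ⊆ z) (hB'z : B' ⊆ z) (hne : B ≠ B') :
    B ∪ B' = z := by
  have h2 := aux_inter_two hQ4 hSQS hz hB hB' hBz hB'z hne
  have h4 := hQ4 B hB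
  have h4' := hQ4 B' hB'
  have hkey := Finset.card_union_add_card_inter B B'
  exact (Finset.eq_of_subset_of_card_le (Finset.union_subset hBz hB'z) (by omega))

lemma aux_pairs_disj {n : ℕ} {Q : Set (Finset (Fin n))}
    (hQ4 : ∀ B ∈ Q, B.card = 4)
    (hSQS : ∀ s : Finset (Fin n), s.card = 3 → ∃! B, B ∈ Q ∧ s ⊆ B)
    {z B B' : Finset (Fin n)} (hz : z.card = 6)
    (hB : B ∈ Q) (hB' : B' ∈ Q) (hBz : B ⊆ z) (hB'z : B' ⊆ z) (hne : B ≠ B') :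
    (z \ B) ∩ (z \ B') = ∅ := by
  rw [← Finset.sdiff_union_distrib, aux_union_eq hQ4 hSQS hz hB hB' hBz hB'z hne,
    Finset.sdiff_self]

lemma aux_three_blocks {n : ℕ} {Q : Set (Finset (Fin n))}
    (hQ4 : ∀ B ∈ Q, B.card = 4)
    (hSQS : ∀ s : Finset (Fin n), s.card = 3 → ∃! B, B ∈ Q ∧ s ⊆ B)
    (hclosed : ∀ B ∈ Q, ∀ B' ∈ Q, (B ∩ B').card = 2 → symmDiff B B' ∈ Q)
    {z B1 B2 : Finset (Fin n)} (hz : z.card = 6)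
    (h1 : B1 ∈ Q) (h2 : B2 ∈ Q) (h1z : B1 ⊆ z) (h2z : B2 ⊆ z) (hne : B1 ≠ B2) :
    {B ∈ Q | B ⊆ z} = {B1, B2, symmDiff B1 B2} := by
  set B3 := symmDiff B1 B2 with hB3def
  have h3 : B3 ∈ Q := hclosed B1 h1 B2 h2 (aux_inter_two hQ4 hSQS hz h1 h2 h1z h2z hne)
  have h3z : B3 ⊆ z := by
    have : B3 ⊆ B1 ∪ B2 := symmDiff_le_sup
    exact this.trans (Finset.union_subset h1z h2z)
  have h2ne : B2.Nonempty := Finset.card_pos.mp (by rw [hQ4 B2 h2]; norm_num)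
  have h1ne : B1.Nonempty := Finset.card_pos.mp (by rw [hQ4 B1 h1]; norm_num)
  have hne31 : B3 ≠ B1 := by
    intro h
    exact h2ne.ne_empty (symmDiff_eq_left.mp h)
  have hne32 : B3 ≠ B2 := by
    intro h
    exact h1ne.ne_empty (symmDiff_eq_right.mp h)
  ext B
  simp only [Set.mem_setOf_eq, Set.mem_insert_iff, Set.mem_singleton_iff]
  constructor
  · rintro ⟨hBQ, hBz⟩
    by_contra hcon
    push_neg at hcon
    obtain ⟨g1, g2, g3⟩ := hcon
    have c1 : (z \ B1).card = 2 := by rw [Finset.card_sdiff_of_subset h1z, hz, hQ4 B1 h1]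
    have c2 : (z \ B2).card = 2 := by rw [Finset.card_sdiff_of_subset h2z, hz, hQ4 B2 h2]
    have c3 : (z \ B3).card = 2 := by rw [Finset.card_sdiff_of_subset h3z, hz, hQ4 B3 h3]
    have cP : (z \ B).card = 2 := by rw [Finset.card_sdiff_of_subset hBz, hz, hQ4 B hBQ]
    have d12 : Disjoint (z \ B1) (z \ B2) :=
      Finset.disjoint_iff_inter_eq_empty.mpr (aux_pairs_disj hQ4 hSQS hz h1 h2 h1z h2z hne)
    have d13 : Disjoint (z \ B1) (z \ B3) :=
      Finset.disjoint_iff_inter_eq_empty.mpr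
        (aux_pairs_disj hQ4 hSQS hz h1 h3 h1z h3z (Ne.symm hne31))
    have d23 : Disjoint (z \ B2) (z \ B3) :=
      Finset.disjoint_iff_inter_eq_empty.mpr
        (aux_pairs_disj hQ4 hSQS hz h2 h3 h2z h3z (Ne.symm hne32))
    have huniv : (z \ B1) ∪ (z \ B2) ∪ (z \ B3) = z := by
      apply Finset.eq_of_subset_of_card_le
      · exact Finset.union_subset (Finset.union_subset (Finset.sdiff_subset) (Finset.sdiff_subset))
          (Finset.sdiff_subset)
      · rw [Finset.card_union_of_disjoint (Finset.disjoint_union_left.mpr ⟨d13, d23⟩),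
          Finset.card_union_of_disjoint d12, c1, c2, c3, hz]
    have hPsub : z \ B ⊆ z := Finset.sdiff_subset
    have hsub : z \ B ⊆ (z \ B1) ∪ (z \ B2) ∪ (z \ B3) := by rw [huniv]; exact hPsub
    have hempty : z \ B = ∅ := by
      apply Finset.eq_empty_iff_forall_notMem.mpr
      intro x hx
      have hx' := hsub hx
      simp only [Finset.mem_union] at hx'
      rcases hx' with (h | h) | h
      · have hm : x ∈ (z \ B) ∩ (z \ B1) := Finset.mem_inter.mpr ⟨hx, h⟩
        rw [aux_pairs_disj hQ4 hSQS hz hBQ h1 hBz h1z g1] at hm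
        exact absurd hm (Finset.notMem_empty x)
      · have hm : x ∈ (z \ B) ∩ (z \ B2) := Finset.mem_inter.mpr ⟨hx, h⟩
        rw [aux_pairs_disj hQ4 hSQS hz hBQ h2 hBz h2z g2] at hm
        exact absurd hm (Finset.notMem_empty x)
      · have hm : x ∈ (z \ B) ∩ (z \ B3) := Finset.mem_inter.mpr ⟨hx, h⟩
        rw [aux_pairs_disj hQ4 hSQS hz hBQ h3 hBz h3z g3] at hm
        exact absurd hm (Finset.notMem_empty x)
    rw [hempty] at cP
    simp at cP
  · rintro (rfl | rfl | rfl)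
    exacts [⟨h1, h1z⟩, ⟨h2, h2z⟩, ⟨h3, h3z⟩]

lemma aux_cover {n : ℕ} {Q : Set (Finset (Fin n))}
    (hQ4 : ∀ B ∈ Q, B.card = 4)
    (hSQS : ∀ s : Finset (Fin n), s.card = 3 → ∃! B, B ∈ Q ∧ s ⊆ B)
    {z B1 B2 B3 : Finset (Fin n)} (hz : z.card = 6)
    (h1 : B1 ∈ Q) (h2 : B2 ∈ Q) (h3 : B3 ∈ Q)
    (h1z : B1 ⊆ z) (h2z : B2 ⊆ z) (h3z : B3 ⊆ z)
    (h12 : B1 ≠ B2) (h13 : B1 ≠ B3) (h23 : B2 ≠ B3) :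
    (z \ B1) ∪ (z \ B2) ∪ (z \ B3) = z := by
  have c1 : (z \ B1).card = 2 := by rw [Finset.card_sdiff_of_subset h1z, hz, hQ4 B1 h1]
  have c2 : (z \ B2).card = 2 := by rw [Finset.card_sdiff_of_subset h2z, hz, hQ4 B2 h2]
  have c3 : (z \ B3).card = 2 := by rw [Finset.card_sdiff_of_subset h3z, hz, hQ4 B3 h3]
  have d12 : Disjoint (z \ B1) (z \ B2) :=
    Finset.disjoint_iff_inter_eq_empty.mpr (aux_pairs_disj hQ4 hSQS hz h1 h2 h1z h2z h12)
  have d13 : Disjoint (z \ B1) (z \ B3) :=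
    Finset.disjoint_iff_inter_eq_empty.mpr (aux_pairs_disj hQ4 hSQS hz h1 h3 h1z h3z h13)
  have d23 : Disjoint (z \ B2) (z \ B3) :=
    Finset.disjoint_iff_inter_eq_empty.mpr (aux_pairs_disj hQ4 hSQS hz h2 h3 h2z h3z h23)
  apply Finset.eq_of_subset_of_card_le
  · exact Finset.union_subset (Finset.union_subset (Finset.sdiff_subset) (Finset.sdiff_subset))
      (Finset.sdiff_subset)
  · rw [Finset.card_union_of_disjoint (Finset.disjoint_union_left.mpr ⟨d13, d23⟩),
      Finset.card_union_of_disjoint d12, c1, c2, c3, hz]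

/-- Let `Q` be the Steiner quadruple system of the extended Hamming code
(a 3-(n,4,1) design closed under symmetric difference of blocks meeting in 2 points).
Every 6-subset `y` containing exactly one block of `Q` is adjacent in the Johnson graph
`J(n,6)` to exactly 6 of the 6-subsets containing exactly 3 blocks of `Q`. -/
theorem stmt7 (n : ℕ) (Q : Set (Finset (Fin n)))
    (hQ4 : ∀ B ∈ Q, B.card = 4)
    (hSQS : ∀ s : Finset (Fin n), s.card = 3 → ∃! B, B ∈ Q ∧ s ⊆ B)
    (hclosed : ∀ B ∈ Q, ∀ B' ∈ Q, (B ∩ B').card = 2 → symmDiff B B' ∈ Q)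
    (y : Finset (Fin n)) (hy6 : y.card = 6)
    (hy1 : {B ∈ Q | B ⊆ y}.ncard = 1) :
    {z : Finset (Fin n) | z.card = 6 ∧ {B ∈ Q | B ⊆ z}.ncard = 3 ∧
      (y ∩ z).card = 5}.ncard = 6 := by
  obtain ⟨B₀, hB₀⟩ := Set.ncard_eq_one.mp hy1
  have hB₀mem : B₀ ∈ {B ∈ Q | B ⊆ y} := by rw [hB₀]; rfl
  have hB₀Q : B₀ ∈ Q := hB₀mem.1
  have hB₀y : B₀ ⊆ y := hB₀mem.2
  have huniqy : ∀ B, B ∈ Q → B ⊆ y → B = B₀ := by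
    intro B h1 h2
    have : B ∈ {B ∈ Q | B ⊆ y} := ⟨h1, h2⟩
    rw [hB₀] at this; exact this
  have hB₀4 : B₀.card = 4 := hQ4 B₀ hB₀Q
  have hyd : (y \ B₀).card = 2 := by rw [Finset.card_sdiff_of_subset hB₀y, hy6, hB₀4]
  obtain ⟨u, v, huv, huvdef⟩ := Finset.card_eq_two.mp hyd
  have hu : u ∈ y \ B₀ := by rw [huvdef]; simp
  have hv : v ∈ y \ B₀ := by rw [huvdef]; simp
  obtain ⟨a, haB⟩ := Finset.card_pos.mp (by rw [hB₀4]; norm_num : 0 < B₀.card)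
  have hBa3 : (B₀ \ {a}).card = 3 := by
    rw [Finset.card_sdiff_of_subset (Finset.singleton_subset_iff.mpr haB), hB₀4, Finset.card_singleton]
  obtain ⟨b, c, d, hbc, hbd, hcd, habcd⟩ := Finset.card_eq_three.mp hBa3
  have hb : b ∈ B₀ \ {a} := by rw [habcd]; simp
  have hc : c ∈ B₀ \ {a} := by rw [habcd]; simp
  have hd : d ∈ B₀ \ {a} := by rw [habcd]; simp
  -- triple cardinality
  have htrip : ∀ t ∈ y \ B₀, ∀ w ∈ B₀ \ {a}, ({t, a, w} : Finset (Fin n)).card = 3 := by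
    intro t ht w hw
    rw [Finset.mem_sdiff] at ht
    rw [Finset.mem_sdiff, Finset.mem_singleton] at hw
    exact Finset.card_eq_three.mpr ⟨t, a, w,
      fun h => ht.2 (by rw [h]; exact haB), fun h => ht.2 (by rw [h]; exact hw.1),
      fun h => hw.2 h.symm, rfl⟩
  -- structure of a block through {t,a,w}
  have struct : ∀ t ∈ y \ B₀, ∀ w ∈ B₀ \ {a}, ∀ B ∈ Q, ({t, a, w} : Finset (Fin n)) ⊆ B →
      ∃ x, x ∉ y ∧ B = {t, a, w, x} := by
    intro t ht w hw B hBQ htr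
    have ht0 := ht
    have hw0 := hw
    rw [Finset.mem_sdiff] at ht
    rw [Finset.mem_sdiff, Finset.mem_singleton] at hw
    have hB4 := hQ4 B hBQ
    have htB : t ∈ B := htr (by simp)
    have haB' : a ∈ B := htr (by simp)
    have hwB : w ∈ B := htr (by simp)
    have hcard1 : (B \ {t, a, w}).card = 1 := by
      rw [Finset.card_sdiff_of_subset htr, hB4, htrip t ht0 w hw0]
    obtain ⟨x, hx⟩ := Finset.card_eq_one.mp hcard1
    have hxmem : x ∈ B \ {t, a, w} := by rw [hx]; simp
    rw [Finset.mem_sdiff] at hxmem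
    have hBeq : B = {t, a, w, x} := by
      have h1 : {t, a, w} ∪ (B \ {t, a, w}) = B := Finset.union_sdiff_of_subset htr
      rw [hx] at h1
      rw [← h1]; ext e; simp
    refine ⟨x, ?_, hBeq⟩
    intro hxy
    have hBy : B ⊆ y := by
      rw [hBeq]
      simp only [Finset.insert_subset_iff, Finset.singleton_subset_iff]
      exact ⟨ht.1, hB₀y haB, hB₀y hw.1, hxy⟩
    exact ht.2 ((huniqy B hBQ hBy) ▸ htB)
  -- forward: membership + structure
  have key : ∀ t ∈ y \ B₀, ∀ w ∈ B₀ \ {a}, ∀ B ∈ Q, ({t, a, w} : Finset (Fin n)) ⊆ B →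
      ((B₀ ∪ B).card = 6 ∧ {C ∈ Q | C ⊆ B₀ ∪ B}.ncard = 3 ∧ (y ∩ (B₀ ∪ B)).card = 5)
      ∧ y ∩ (B₀ ∪ B) = insert t B₀ := by
    intro t ht w hw B hBQ htr
    obtain ⟨x, hxy, hBeq⟩ := struct t ht w hw B hBQ htr
    rw [Finset.mem_sdiff] at ht
    rw [Finset.mem_sdiff, Finset.mem_singleton] at hw
    have hB4 := hQ4 B hBQ
    have htB : t ∈ B := htr (by simp)
    have haB' : a ∈ B := htr (by simp)
    have hwB : w ∈ B := htr (by simp)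
    have hneB : B ≠ B₀ := fun h => ht.2 (h ▸ htB)
    have hinter : B ∩ B₀ = {a, w} := by
      ext e
      simp only [Finset.mem_inter, Finset.mem_insert, Finset.mem_singleton]
      constructor
      · rintro ⟨heB, heB₀⟩
        rw [hBeq] at heB
        simp only [Finset.mem_insert, Finset.mem_singleton] at heB
        rcases heB with rfl | rfl | rfl | rfl
        · exact absurd heB₀ ht.2
        · left; rfl
        · right; rfl
        · exact absurd (hB₀y heB₀) hxy
      · rintro (rfl | rfl)
        exacts [⟨haB', haB⟩, ⟨hwB, hw.1⟩]
    have hic : (B ∩ B₀).card = 2 := by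
      rw [hinter, Finset.card_insert_of_notMem (by simp only [Finset.mem_singleton]; exact fun h => hw.2 h.symm),
        Finset.card_singleton]
    have hz6 : (B₀ ∪ B).card = 6 := by
      have hk := Finset.card_union_add_card_inter B₀ B
      rw [Finset.inter_comm, hic, hB₀4, hB4] at hk
      omega
    have hyz : y ∩ (B₀ ∪ B) = insert t B₀ := by
      ext e
      simp only [Finset.mem_inter, Finset.mem_union, Finset.mem_insert]
      constructor
      · rintro ⟨hey, heBB⟩
        rcases heBB with h | h
        · right; exact h
        · rw [hBeq] at h
          simp only [Finset.mem_insert, Finset.mem_singleton] at h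
          rcases h with rfl | rfl | rfl | rfl
          · left; rfl
          · right; exact haB
          · right; exact hw.1
          · exact absurd hey hxy
      · rintro (rfl | h)
        · exact ⟨ht.1, Or.inr htB⟩
        · exact ⟨hB₀y h, Or.inl h⟩
    have hyz5 : (y ∩ (B₀ ∪ B)).card = 5 := by
      rw [hyz, Finset.card_insert_of_notMem ht.2, hB₀4]
    have hthree : {C ∈ Q | C ⊆ B₀ ∪ B} = {B₀, B, symmDiff B₀ B} :=
      aux_three_blocks hQ4 hSQS hclosed hz6 hB₀Q hBQ Finset.subset_union_left
        Finset.subset_union_right (Ne.symm hneB)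
    have hBnon : B.Nonempty := Finset.card_pos.mp (by rw [hB4]; norm_num)
    have hB₀non : B₀.Nonempty := Finset.card_pos.mp (by rw [hB₀4]; norm_num)
    have hn3 : {C ∈ Q | C ⊆ B₀ ∪ B}.ncard = 3 := by
      rw [hthree]
      refine Set.ncard_eq_three.mpr ⟨B₀, B, symmDiff B₀ B, Ne.symm hneB, ?_, ?_, rfl⟩
      · intro h
        exact hBnon.ne_empty (symmDiff_eq_left.mp h.symm)
      · intro h
        exact hB₀non.ne_empty (symmDiff_eq_right.mp h.symm)
    exact ⟨⟨hz6, hn3, hyz5⟩, hyz⟩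
  -- injectivity for same t
  have inj : ∀ t ∈ y \ B₀, ∀ w ∈ B₀ \ {a}, ∀ w' ∈ B₀ \ {a}, ∀ B ∈ Q, ∀ B' ∈ Q,
      ({t, a, w} : Finset (Fin n)) ⊆ B → ({t, a, w'} : Finset (Fin n)) ⊆ B' →
      B₀ ∪ B = B₀ ∪ B' → w = w' := by
    intro t ht w hw w' hw' B hBQ B' hB'Q htr htr' heq
    obtain ⟨x, hxy, hBeq⟩ := struct t ht w hw B hBQ htr
    obtain ⟨x', hx'y, hB'eq⟩ := struct t ht w' hw' B' hB'Q htr'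
    rw [Finset.mem_sdiff] at ht
    rw [Finset.mem_sdiff, Finset.mem_singleton] at hw hw'
    have hx'B' : x' ∈ B' := by rw [hB'eq]; simp
    have hx'z : x' ∈ B₀ ∪ B := by rw [heq]; exact Finset.mem_union_right _ hx'B'
    have hx'B : x' ∈ B := by
      rcases Finset.mem_union.mp hx'z with h | h
      · exact absurd (hB₀y h) hx'y
      · exact h
    have hxx : x' = x := by
      rw [hBeq] at hx'B
      simp only [Finset.mem_insert, Finset.mem_singleton] at hx'B
      rcases hx'B with h | h | h | h
      · exact absurd (h ▸ ht.1) hx'y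
      · exact absurd (h ▸ (hB₀y haB)) hx'y
      · exact absurd (h ▸ (hB₀y hw.1)) hx'y
      · exact h
    have htax : ({t, a, x} : Finset (Fin n)).card = 3 := by
      refine Finset.card_eq_three.mpr ⟨t, a, x, ?_, ?_, ?_, rfl⟩
      · exact fun h => ht.2 (by rw [h]; exact haB)
      · exact fun h => hxy (by rw [← h]; exact ht.1)
      · exact fun h => hxy (by rw [← h]; exact hB₀y haB)
    obtain ⟨C, _, hCu⟩ := hSQS {t, a, x} htax
    have hsubB : ({t, a, x} : Finset (Fin n)) ⊆ B := by
      rw [hBeq]; intro e he; simp only [Finset.mem_insert, Finset.mem_singleton] at he ⊢; tauto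
    have hsubB' : ({t, a, x} : Finset (Fin n)) ⊆ B' := by
      rw [hB'eq, ← hxx]
      intro e he; simp only [Finset.mem_insert, Finset.mem_singleton] at he ⊢; tauto
    have hBB' : B = B' := (hCu B ⟨hBQ, hsubB⟩).trans (hCu B' ⟨hB'Q, hsubB'⟩).symm
    have hw'B : w' ∈ B := by rw [hBB', hB'eq]; simp
    rw [hBeq] at hw'B
    simp only [Finset.mem_insert, Finset.mem_singleton] at hw'B
    rcases hw'B with h | h | h | h
    · exact absurd (h ▸ hw'.1) ht.2
    · exact absurd h hw'.2
    · exact h.symm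
    · exact absurd (h ▸ (hB₀y hw'.1)) hxy
  -- completeness
  have compl : ∀ z : Finset (Fin n), z.card = 6 → {B ∈ Q | B ⊆ z}.ncard = 3 →
      (y ∩ z).card = 5 →
      ∃ t ∈ y \ B₀, ∃ w ∈ B₀ \ {a}, ∃ B ∈ Q,
        ({t, a, w} : Finset (Fin n)) ⊆ B ∧ z = B₀ ∪ B := by
    intro z hz6 hz3 hz5
    obtain ⟨C1, C2, C3, h12, h13, h23, hset⟩ := Set.ncard_eq_three.mp hz3
    have hC1 : C1 ∈ Q ∧ C1 ⊆ z := by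
      have : C1 ∈ {B ∈ Q | B ⊆ z} := by rw [hset]; simp
      exact this
    have hC2 : C2 ∈ Q ∧ C2 ⊆ z := by
      have : C2 ∈ {B ∈ Q | B ⊆ z} := by rw [hset]; simp
      exact this
    have hC3 : C3 ∈ Q ∧ C3 ⊆ z := by
      have : C3 ∈ {B ∈ Q | B ⊆ z} := by rw [hset]; simp
      exact this
    have hq1 : (z \ y).card = 1 := by
      have hk := Finset.card_inter_add_card_sdiff z y
      rw [Finset.inter_comm] at hk
      omega
    obtain ⟨q, hqdef⟩ := Finset.card_eq_one.mp hq1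
    have hqmem : q ∈ z \ y := by rw [hqdef]; simp
    rw [Finset.mem_sdiff] at hqmem
    obtain ⟨hqz, hqy⟩ := hqmem
    -- some block avoids q
    have hcov := aux_cover hQ4 hSQS hz6 hC1.1 hC2.1 hC3.1 hC1.2 hC2.2 hC3.2 h12 h13 h23
    have hqcov : q ∈ (z \ C1) ∪ (z \ C2) ∪ (z \ C3) := by rw [hcov]; exact hqz
    have hBavoid : ∃ C, (C ∈ Q ∧ C ⊆ z) ∧ q ∉ C := by
      simp only [Finset.mem_union, Finset.mem_sdiff] at hqcov
      rcases hqcov with (h | h) | h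
      exacts [⟨C1, hC1, h.2⟩, ⟨C2, hC2, h.2⟩, ⟨C3, hC3, h.2⟩]
    obtain ⟨C, ⟨hCQ, hCz⟩, hqC⟩ := hBavoid
    have hCy : C ⊆ y := by
      intro e he
      by_contra hey
      have hezy : e ∈ z \ y := Finset.mem_sdiff.mpr ⟨hCz he, hey⟩
      rw [hqdef, Finset.mem_singleton] at hezy
      exact hqC (hezy ▸ he)
    have hCB₀ : C = B₀ := huniqy C hCQ hCy
    have hB₀z : B₀ ⊆ z := hCB₀ ▸ hCz
    -- the point t
    have htc : ((y ∩ z) \ B₀).card = 1 := by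
      rw [Finset.card_sdiff_of_subset (Finset.subset_inter hB₀y hB₀z), hz5, hB₀4]
    obtain ⟨t, htdef⟩ := Finset.card_eq_one.mp htc
    have htmem : t ∈ (y ∩ z) \ B₀ := by rw [htdef]; simp
    rw [Finset.mem_sdiff, Finset.mem_inter] at htmem
    obtain ⟨⟨hty, htz⟩, htB₀⟩ := htmem
    have htyB : t ∈ y \ B₀ := Finset.mem_sdiff.mpr ⟨hty, htB₀⟩
    -- another block
    have hex2 : ∃ C', C' ∈ Q ∧ C' ⊆ z ∧ C' ≠ B₀ := by
      by_cases h1b : C1 = B₀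
      · exact ⟨C2, hC2.1, hC2.2, fun h => h12 (by rw [h1b, h])⟩
      · exact ⟨C1, hC1.1, hC1.2, h1b⟩
    obtain ⟨C', hC'Q, hC'z, hC'ne⟩ := hex2
    have htC' : t ∈ C' := by
      have huni := aux_union_eq hQ4 hSQS hz6 hC'Q hB₀Q hC'z hB₀z hC'ne
      have : t ∈ C' ∪ B₀ := by rw [huni]; exact htz
      rcases Finset.mem_union.mp this with h | h
      · exact h
      · exact absurd h htB₀
    -- a block containing t and a
    have hexta : ∃ D, D ∈ Q ∧ D ⊆ z ∧ D ≠ B₀ ∧ t ∈ D ∧ a ∈ D := by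
      by_cases haC' : a ∈ C'
      · exact ⟨C', hC'Q, hC'z, hC'ne, htC', haC'⟩
      · refine ⟨symmDiff B₀ C',
          hclosed B₀ hB₀Q C' hC'Q
            (aux_inter_two hQ4 hSQS hz6 hB₀Q hC'Q hB₀z hC'z (Ne.symm hC'ne)), ?_, ?_, ?_, ?_⟩
        · exact (symmDiff_le_sup : symmDiff B₀ C' ⊆ B₀ ∪ C').trans
            (Finset.union_subset hB₀z hC'z)
        · intro h
          have hC'e := symmDiff_eq_left.mp h
          exact (Finset.card_pos.mp (by rw [hQ4 C' hC'Q]; norm_num) :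
            C'.Nonempty).ne_empty hC'e
        · exact Finset.mem_symmDiff.mpr (Or.inr ⟨htC', htB₀⟩)
        · exact Finset.mem_symmDiff.mpr (Or.inl ⟨haB, haC'⟩)
    obtain ⟨D, hDQ, hDz, hDne, htD, haD⟩ := hexta
    have hDB₀ : (D ∩ B₀).card = 2 := aux_inter_two hQ4 hSQS hz6 hDQ hB₀Q hDz hB₀z hDne
    have hw1 : ((D ∩ B₀) \ {a}).card = 1 := by
      rw [Finset.card_sdiff_of_subset
        (Finset.singleton_subset_iff.mpr (Finset.mem_inter.mpr ⟨haD, haB⟩)), hDB₀,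
        Finset.card_singleton]
    obtain ⟨w, hwdef⟩ := Finset.card_eq_one.mp hw1
    have hwmem : w ∈ (D ∩ B₀) \ {a} := by rw [hwdef]; simp
    rw [Finset.mem_sdiff, Finset.mem_inter] at hwmem
    have hwB₀a : w ∈ B₀ \ {a} := Finset.mem_sdiff.mpr ⟨hwmem.1.2, hwmem.2⟩
    have hsubD : ({t, a, w} : Finset (Fin n)) ⊆ D := by
      intro e he
      simp only [Finset.mem_insert, Finset.mem_singleton] at he
      rcases he with rfl | rfl | rfl
      exacts [htD, haD, hwmem.1.1]
    exact ⟨t, htyB, w, hwB₀a, D, hDQ, hsubD,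
      (aux_union_eq hQ4 hSQS hz6 hB₀Q hDQ hB₀z hDz (fun h => hDne h.symm)).symm⟩
  -- the six blocks
  obtain ⟨Bub, ⟨hBubQ, hBubs⟩, hBubu⟩ := hSQS {u, a, b} (htrip u hu b hb)
  obtain ⟨Buc, ⟨hBucQ, hBucs⟩, hBucu⟩ := hSQS {u, a, c} (htrip u hu c hc)
  obtain ⟨Bud, ⟨hBudQ, hBuds⟩, hBudu⟩ := hSQS {u, a, d} (htrip u hu d hd)
  obtain ⟨Bvb, ⟨hBvbQ, hBvbs⟩, hBvbu⟩ := hSQS {v, a, b} (htrip v hv b hb)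
  obtain ⟨Bvc, ⟨hBvcQ, hBvcs⟩, hBvcu⟩ := hSQS {v, a, c} (htrip v hv c hc)
  obtain ⟨Bvd, ⟨hBvdQ, hBvds⟩, hBvdu⟩ := hSQS {v, a, d} (htrip v hv d hd)
  have hSeq : {z : Finset (Fin n) | z.card = 6 ∧ {B ∈ Q | B ⊆ z}.ncard = 3 ∧ (y ∩ z).card = 5}
      = {B₀ ∪ Bub, B₀ ∪ Buc, B₀ ∪ Bud, B₀ ∪ Bvb, B₀ ∪ Bvc, B₀ ∪ Bvd} := by
    ext z
    simp only [Set.mem_setOf_eq, Set.mem_insert_iff, Set.mem_singleton_iff]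
    constructor
    · rintro ⟨h6, h3, h5⟩
      obtain ⟨t, ht, w, hw, B, hBQ, hsub, hzeq⟩ := compl z h6 h3 h5
      have htuv : t = u ∨ t = v := by
        have h' := ht; rw [huvdef] at h'
        simpa using h'
      have hwbcd : w = b ∨ w = c ∨ w = d := by
        have h' := hw; rw [habcd] at h'
        simpa using h'
      subst hzeq
      rcases htuv with rfl | rfl <;> rcases hwbcd with rfl | rfl | rfl
      · exact Or.inl (by rw [hBubu B ⟨hBQ, hsub⟩])
      · exact Or.inr (Or.inl (by rw [hBucu B ⟨hBQ, hsub⟩]))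
      · exact Or.inr (Or.inr (Or.inl (by rw [hBudu B ⟨hBQ, hsub⟩])))
      · exact Or.inr (Or.inr (Or.inr (Or.inl (by rw [hBvbu B ⟨hBQ, hsub⟩]))))
      · exact Or.inr (Or.inr (Or.inr (Or.inr (Or.inl (by rw [hBvcu B ⟨hBQ, hsub⟩])))))
      · exact Or.inr (Or.inr (Or.inr (Or.inr (Or.inr (by rw [hBvdu B ⟨hBQ, hsub⟩])))))
    · intro h
      rcases h with rfl | rfl | rfl | rfl | rfl | rfl
      · exact (key u hu b hb Bub hBubQ hBubs).1
      · exact (key u hu c hc Buc hBucQ hBucs).1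
      · exact (key u hu d hd Bud hBudQ hBuds).1
      · exact (key v hv b hb Bvb hBvbQ hBvbs).1
      · exact (key v hv c hc Bvc hBvcQ hBvcs).1
      · exact (key v hv d hd Bvd hBvdQ hBvds).1
  rw [hSeq]
  -- distinctness
  have hyub := (key u hu b hb Bub hBubQ hBubs).2
  have hyuc := (key u hu c hc Buc hBucQ hBucs).2
  have hyud := (key u hu d hd Bud hBudQ hBuds).2
  have hyvb := (key v hv b hb Bvb hBvbQ hBvbs).2
  have hyvc := (key v hv c hc Bvc hBvcQ hBvcs).2
  have hyvd := (key v hv d hd Bvd hBvdQ hBvds).2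
  have hcross : ∀ z1 z2 : Finset (Fin n), y ∩ z1 = insert u B₀ → y ∩ z2 = insert v B₀ →
      z1 ≠ z2 := by
    intro z1 z2 e1 e2 h
    rw [h, e2] at e1
    have hmem : u ∈ insert v B₀ := by rw [e1]; simp
    simp only [Finset.mem_insert] at hmem
    rcases hmem with h' | h'
    · exact huv h'
    · exact (Finset.mem_sdiff.mp hu).2 h'
  have ne12 : B₀ ∪ Bub ≠ B₀ ∪ Buc :=
    fun h => hbc (inj u hu b hb c hc Bub hBubQ Buc hBucQ hBubs hBucs h)
  have ne13 : B₀ ∪ Bub ≠ B₀ ∪ Bud :=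
    fun h => hbd (inj u hu b hb d hd Bub hBubQ Bud hBudQ hBubs hBuds h)
  have ne23 : B₀ ∪ Buc ≠ B₀ ∪ Bud :=
    fun h => hcd (inj u hu c hc d hd Buc hBucQ Bud hBudQ hBucs hBuds h)
  have ne45 : B₀ ∪ Bvb ≠ B₀ ∪ Bvc :=
    fun h => hbc (inj v hv b hb c hc Bvb hBvbQ Bvc hBvcQ hBvbs hBvcs h)
  have ne46 : B₀ ∪ Bvb ≠ B₀ ∪ Bvd :=
    fun h => hbd (inj v hv b hb d hd Bvb hBvbQ Bvd hBvdQ hBvbs hBvds h)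
  have ne56 : B₀ ∪ Bvc ≠ B₀ ∪ Bvd :=
    fun h => hcd (inj v hv c hc d hd Bvc hBvcQ Bvd hBvdQ hBvcs hBvds h)
  have ne14 : B₀ ∪ Bub ≠ B₀ ∪ Bvb := hcross _ _ hyub hyvb
  have ne15 : B₀ ∪ Bub ≠ B₀ ∪ Bvc := hcross _ _ hyub hyvc
  have ne16 : B₀ ∪ Bub ≠ B₀ ∪ Bvd := hcross _ _ hyub hyvd
  have ne24 : B₀ ∪ Buc ≠ B₀ ∪ Bvb := hcross _ _ hyuc hyvb
  have ne25 : B₀ ∪ Buc ≠ B₀ ∪ Bvc := hcross _ _ hyuc hyvc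
  have ne26 : B₀ ∪ Buc ≠ B₀ ∪ Bvd := hcross _ _ hyuc hyvd
  have ne34 : B₀ ∪ Bud ≠ B₀ ∪ Bvb := hcross _ _ hyud hyvb
  have ne35 : B₀ ∪ Bud ≠ B₀ ∪ Bvc := hcross _ _ hyud hyvc
  have ne36 : B₀ ∪ Bud ≠ B₀ ∪ Bvd := hcross _ _ hyud hyvd
  rw [Set.ncard_insert_of_notMem (by simp [ne12, ne13, ne14, ne15, ne16]),
    Set.ncard_insert_of_notMem (by simp [ne23, ne24, ne25, ne26]),
    Set.ncard_insert_of_notMem (by simp [ne34, ne35, ne36]),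
    Set.ncard_insert_of_notMem (by simp [ne45, ne46]),
    Set.ncard_insert_of_notMem (by simp [ne56]),
    Set.ncard_singleton]
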